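/- arXiv:1402.3851 — 4 statements merged into one kernel-verified Lean document; each statement's English description precedes it below -/
import Mathlib

section
/- Let G be a weighted graph on a finite vertex set V, let u and v be distinct vertices of G, and let p be a path in G from u to v all of whose edges have positive weight. Then for every function x : V → ℝ, (x(u) − x(v))² ≤ (Σ_{e'∈p} 1/w_G(e')) · Q_G(x), where the sum ranges over the edges of p. -/
/-- A weighted graph on a finite vertex set `V`: a symmetric weight function with zero
diagonal and nonnegative weights. -/
def IsWeightedGraph {V : Type*} (w : V → V → ℝ) : Prop :=
  (∀ i j, w i j = w j i) ∧ (∀ i, w i i = 0) ∧ (∀ i j, 0 ≤ w i j)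

/-- The Laplacian quadratic form `Q_G(x) = (1/2)·Σ_{i,j} w(i,j)·(x i − x j)²`. -/
noncomputable def lapQF {V : Type*} [Fintype V] (w : V → V → ℝ) (x : V → ℝ) : ℝ :=
  (1 / 2) * ∑ i, ∑ j, w i j * (x i - x j) ^ 2

/-- `f : Fin (k+1) → V` is a path in the graph with weights `w` from `u` to `v`:
its vertices are distinct and all its edges have positive weight. -/
def IsPathIn {V : Type*} (w : V → V → ℝ) (u v : V) (k : ℕ) (f : Fin (k + 1) → V) : Prop :=
  f 0 = u ∧ f (Fin.last k) = v ∧ Function.Injective f ∧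
    ∀ i : Fin k, 0 < w (f i.castSucc) (f i.succ)

/-- The sum `Σ_{e' ∈ p} 1 / w(e')` over the edges of the path `f`. -/
noncomputable def pathRes {V : Type*} (w : V → V → ℝ) (k : ℕ) (f : Fin (k + 1) → V) : ℝ :=
  ∑ i : Fin k, (w (f i.castSucc) (f i.succ))⁻¹

/-- If `p` is a path from `u` to `v` in a weighted graph `G` all of whose edges have
positive weight, then `(x u − x v)² ≤ (Σ_{e'∈p} 1/w(e')) · Q_G(x)` for every `x`. -/
theorem path_resistance_bound {V : Type*} [Fintype V] [DecidableEq V]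
    (w : V → V → ℝ) (hG : IsWeightedGraph w) (hn : 2 ≤ Fintype.card V)
    (u v : V) (huv : u ≠ v) (k : ℕ) (f : Fin (k + 1) → V)
    (hp : IsPathIn w u v k f) (x : V → ℝ) :
    (x u - x v) ^ 2 ≤ pathRes w k f * lapQF w x := by
  obtain ⟨hf0, hfl, hinj, hpos⟩ := hp
  obtain ⟨hsym, hdiag, hnn⟩ := hG
  set d : Fin k → ℝ := fun i => x (f i.castSucc) - x (f i.succ) with hd
  set ww : Fin k → ℝ := fun i => w (f i.castSucc) (f i.succ) with hww
  -- telescoping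
  open Fin.NatCast in
  have htel : x u - x v = ∑ i : Fin k, d i := by
    have h1 : ∑ i : Fin k, d i
        = ∑ i ∈ Finset.range k, (x (f ((i : ℕ) : Fin (k+1))) - x (f (((i : ℕ)+1 : ℕ) : Fin (k+1)))) := by
      rw [← Fin.sum_univ_eq_sum_range]
      refine Finset.sum_congr rfl fun i _ => ?_
      have h2 : ((i : ℕ) : Fin (k+1)) = i.castSucc := by
        ext; simp [Fin.val_cast_of_lt (Nat.lt_succ_of_lt i.isLt)]
      have h3 : (((i : ℕ)+1 : ℕ) : Fin (k+1)) = i.succ := by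
        ext; simp [Fin.val_cast_of_lt (Nat.succ_lt_succ i.isLt)]
      rw [h2, h3]
    rw [h1, Finset.sum_range_sub' (fun j => x (f (j : Fin (k+1)))) k]
    have h0 : ((0 : ℕ) : Fin (k+1)) = 0 := by simp
    have hk : ((k : ℕ) : Fin (k+1)) = Fin.last k := by
      ext; simp [Fin.val_cast_of_lt (Nat.lt_succ_self k)]
    rw [h0, hk, hf0, hfl]
  -- Cauchy-Schwarz
  have hcs : (∑ i : Fin k, d i) ^ 2 ≤ (∑ i : Fin k, (ww i)⁻¹) * ∑ i : Fin k, ww i * d i ^ 2 := by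
    have := Finset.sum_mul_sq_le_sq_mul_sq Finset.univ
      (fun i : Fin k => Real.sqrt (ww i)⁻¹) (fun i => Real.sqrt (ww i) * d i)
    have e1 : ∀ i : Fin k, Real.sqrt (ww i)⁻¹ * (Real.sqrt (ww i) * d i) = d i := by
      intro i
      rw [← mul_assoc, ← Real.sqrt_mul (inv_nonneg.2 (hpos i).le), inv_mul_cancel₀ (hpos i).ne',
        Real.sqrt_one, one_mul]
    have e2 : ∀ i : Fin k, (Real.sqrt (ww i)⁻¹) ^ 2 = (ww i)⁻¹ := by
      intro i; rw [Real.sq_sqrt (inv_nonneg.2 (hpos i).le)]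
    have e3 : ∀ i : Fin k, (Real.sqrt (ww i) * d i) ^ 2 = ww i * d i ^ 2 := by
      intro i; rw [mul_pow, Real.sq_sqrt (hpos i).le]
    simpa only [e1, e2, e3] using this
  -- energy bound
  have hT : ∑ i : Fin k, ww i * d i ^ 2 ≤ lapQF w x := by
    set T : V × V → ℝ := fun p => w p.1 p.2 * (x p.1 - x p.2) ^ 2 with hTdef
    have hQ : lapQF w x = (1/2) * ∑ p : V × V, T p := by
      rw [lapQF, ← Finset.sum_product' Finset.univ Finset.univ (fun i j => w i j * (x i - x j)^2)]
      rfl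
    set e1 : Fin k → V × V := fun i => (f i.castSucc, f i.succ) with he1
    set e2 : Fin k → V × V := fun i => (f i.succ, f i.castSucc) with he2
    have hinj1 : ∀ a ∈ (Finset.univ : Finset (Fin k)), ∀ b ∈ Finset.univ, e1 a = e1 b → a = b := by
      intro a _ b _ h
      have := hinj (congrArg Prod.fst h)
      exact Fin.castSucc_injective k this
    have hinj2 : ∀ a ∈ (Finset.univ : Finset (Fin k)), ∀ b ∈ Finset.univ, e2 a = e2 b → a = b := by
      intro a _ b _ h
      have := hinj (congrArg Prod.snd h)
      exact Fin.castSucc_injective k this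
    have hdisj : Disjoint (Finset.image e1 Finset.univ) (Finset.image e2 Finset.univ) := by
      rw [Finset.disjoint_left]
      rintro p hp1 hp2
      obtain ⟨i, -, hi⟩ := Finset.mem_image.mp hp1
      obtain ⟨j, -, hj⟩ := Finset.mem_image.mp hp2
      rw [← hj] at hi
      have h1 : f i.castSucc = f j.succ := congrArg Prod.fst hi
      have h2 : f i.succ = f j.castSucc := congrArg Prod.snd hi
      have e1' : (i : ℕ) = (j : ℕ) + 1 := by simpa [Fin.ext_iff] using hinj h1
      have e2' : (i : ℕ) + 1 = (j : ℕ) := by simpa [Fin.ext_iff] using hinj h2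
      omega
    have hs1 : ∑ p ∈ Finset.image e1 Finset.univ, T p = ∑ i : Fin k, ww i * d i ^ 2 :=
      Finset.sum_image hinj1
    have hs2 : ∑ p ∈ Finset.image e2 Finset.univ, T p = ∑ i : Fin k, ww i * d i ^ 2 := by
      rw [Finset.sum_image hinj2]
      refine Finset.sum_congr rfl fun i _ => ?_
      simp only [T, e2, ww, d, hsym (f i.succ) (f i.castSucc)]
      ring
    have hsub : ∑ p ∈ Finset.image e1 Finset.univ ∪ Finset.image e2 Finset.univ, T p
        ≤ ∑ p : V × V, T p := by
      refine Finset.sum_le_sum_of_subset_of_nonneg (Finset.subset_univ _) fun p _ _ => ?_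
      exact mul_nonneg (hnn p.1 p.2) (sq_nonneg _)
    rw [Finset.sum_union hdisj, hs1, hs2] at hsub
    rw [hQ]
    linarith
  calc (x u - x v) ^ 2 = (∑ i : Fin k, d i) ^ 2 := by rw [htel]
    _ ≤ (∑ i : Fin k, (ww i)⁻¹) * ∑ i : Fin k, ww i * d i ^ 2 := hcs
    _ ≤ pathRes w k f * lapQF w x := by
        refine mul_le_mul_of_nonneg_left hT ?_
        exact Finset.sum_nonneg fun i _ => inv_nonneg.2 (hpos i).le
end

section
/- Let G be a weighted graph on n ≥ 2 vertices, let α ≥ 1 and t ≥ 1, and let H_1, …, H_t be a t-bundle of α-spanners of G with union H. Then for every edge e = {u,v} of G that is not an edge of H and for every x : V → ℝ, we have w_G(u,v)·(x(u) − x(v))² ≤ (α/t)·Q_G(x). -/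
/-- `H` is a subgraph of `G` carrying the same weights on a subset of the edges of `G`:
its weight function is symmetric and at every pair it either agrees with `G` or is `0`. -/
def IsSubgraph {V : Type*} (wG wH : V → V → ℝ) : Prop :=
  (∀ i j, wH i j = wH j i) ∧ (∀ i j, wH i j = wG i j ∨ wH i j = 0)

/-- `H` is an `α`-spanner of `G`: a subgraph such that every edge `{u,v}` of `G` has
stretch at most `α` over `H`, i.e. `H` contains a `u`–`v` path `p` with
`w_G(u,v) · Σ_{e'∈p} 1/w(e') ≤ α`. -/
def IsSpanner {V : Type*} (α : ℝ) (wG wH : V → V → ℝ) : Prop :=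
  IsSubgraph wG wH ∧ ∀ u v : V, 0 < wG u v →
    ∃ (k : ℕ) (f : Fin (k + 1) → V), IsPathIn wH u v k f ∧ wG u v * pathRes wH k f ≤ α

open scoped Classical in
/-- The graph obtained from `G` by deleting the edges of `H_1, …, H_{i-1}`. -/
noncomputable def deleteBefore {V : Type*} (wG : V → V → ℝ) {t : ℕ}
    (Hs : Fin t → V → V → ℝ) (i : Fin t) : V → V → ℝ :=
  fun a b => if ∃ j, j < i ∧ Hs j a b ≠ 0 then 0 else wG a b

/-- `H_1, …, H_t` is a `t`-bundle of `α`-spanners of `G`: pairwise edge-disjoint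
subgraphs of `G` such that each `H_i` is an `α`-spanner of `G` minus the edges of
`H_1, …, H_{i-1}`. -/
def IsBundle {V : Type*} (α : ℝ) (wG : V → V → ℝ) {t : ℕ}
    (Hs : Fin t → V → V → ℝ) : Prop :=
  (∀ i, IsSubgraph wG (Hs i)) ∧
  (∀ i j, i ≠ j → ∀ a b, Hs i a b = 0 ∨ Hs j a b = 0) ∧
  (∀ i, IsSpanner α (deleteBefore wG Hs i) (Hs i))

section Aux
variable {V : Type*}

lemma telescope_path (k : ℕ) (f : Fin (k + 1) → V) (x : V → ℝ) :
    ∑ i : Fin k, (x (f i.castSucc) - x (f i.succ)) = x (f 0) - x (f (Fin.last k)) := by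
  induction k with
  | zero => simp
  | succ n ih =>
    rw [Fin.sum_univ_castSucc]
    simp only [Fin.succ_castSucc]
    have h := ih (f ∘ Fin.castSucc)
    simp only [Function.comp_apply] at h
    rw [h, Fin.castSucc_zero, Fin.succ_last]
    ring

lemma lapQF_nonneg [Fintype V] {w : V → V → ℝ} (hw : ∀ i j, 0 ≤ w i j) (x : V → ℝ) :
    0 ≤ lapQF w x := by
  unfold lapQF
  have : (0:ℝ) ≤ ∑ i, ∑ j, w i j * (x i - x j) ^ 2 :=
    Finset.sum_nonneg fun i _ => Finset.sum_nonneg fun j _ =>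
      mul_nonneg (hw i j) (sq_nonneg _)
  linarith

lemma lapQF_mono [Fintype V] {w w' : V → V → ℝ} (h : ∀ a b, w a b ≤ w' a b) (x : V → ℝ) :
    lapQF w x ≤ lapQF w' x := by
  unfold lapQF
  have : ∑ i, ∑ j, w i j * (x i - x j) ^ 2 ≤ ∑ i, ∑ j, w' i j * (x i - x j) ^ 2 :=
    Finset.sum_le_sum fun i _ => Finset.sum_le_sum fun j _ =>
      mul_le_mul_of_nonneg_right (h i j) (sq_nonneg _)
  linarith

lemma cs_path (w : V → V → ℝ) (k : ℕ) (f : Fin (k + 1) → V)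
    (hpos : ∀ i : Fin k, 0 < w (f i.castSucc) (f i.succ)) (x : V → ℝ) :
    (x (f 0) - x (f (Fin.last k))) ^ 2 ≤
      pathRes w k f *
        ∑ i : Fin k, w (f i.castSucc) (f i.succ) * (x (f i.castSucc) - x (f i.succ)) ^ 2 := by
  rw [← telescope_path k f x]
  have hcs := Finset.sum_mul_sq_le_sq_mul_sq Finset.univ
    (fun i : Fin k => Real.sqrt (w (f i.castSucc) (f i.succ))⁻¹)
    (fun i : Fin k => Real.sqrt (w (f i.castSucc) (f i.succ)) * (x (f i.castSucc) - x (f i.succ)))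
  have heq : ∀ i : Fin k,
      Real.sqrt (w (f i.castSucc) (f i.succ))⁻¹ *
        (Real.sqrt (w (f i.castSucc) (f i.succ)) * (x (f i.castSucc) - x (f i.succ))) =
      x (f i.castSucc) - x (f i.succ) := by
    intro i
    rw [← mul_assoc, ← Real.sqrt_mul (inv_nonneg.2 (hpos i).le), inv_mul_cancel₀ (hpos i).ne',
      Real.sqrt_one, one_mul]
  have h2 : ∀ i : Fin k, (Real.sqrt (w (f i.castSucc) (f i.succ))⁻¹) ^ 2 =
      (w (f i.castSucc) (f i.succ))⁻¹ := fun i => Real.sq_sqrt (inv_nonneg.2 (hpos i).le)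
  have h3 : ∀ i : Fin k,
      (Real.sqrt (w (f i.castSucc) (f i.succ)) * (x (f i.castSucc) - x (f i.succ))) ^ 2 =
      w (f i.castSucc) (f i.succ) * (x (f i.castSucc) - x (f i.succ)) ^ 2 := by
    intro i
    rw [mul_pow, Real.sq_sqrt (hpos i).le]
  simp only [heq, h2, h3] at hcs
  exact hcs

lemma path_sum_le_lapQF [Fintype V] [DecidableEq V] (w : V → V → ℝ)
    (hsym : ∀ i j, w i j = w j i) (hnn : ∀ i j, 0 ≤ w i j)
    (k : ℕ) (f : Fin (k + 1) → V) (hinj : Function.Injective f) (x : V → ℝ) :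
    ∑ i : Fin k, w (f i.castSucc) (f i.succ) * (x (f i.castSucc) - x (f i.succ)) ^ 2 ≤
      lapQF w x := by
  classical
  set g : V × V → ℝ := fun p => w p.1 p.2 * (x p.1 - x p.2) ^ 2 with hg
  have hgnn : ∀ p : V × V, 0 ≤ g p := fun p => mul_nonneg (hnn _ _) (sq_nonneg _)
  set ι : Fin k → V × V := fun i => (f i.castSucc, f i.succ) with hι
  set ι' : Fin k → V × V := fun i => (f i.succ, f i.castSucc) with hι'
  have hιinj : Function.Injective ι := by
    intro i j hij
    have h1 : f i.castSucc = f j.castSucc := congrArg Prod.fst hij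
    have := hinj h1
    exact Fin.castSucc_injective k this
  have hι'inj : Function.Injective ι' := by
    intro i j hij
    have h1 : f i.succ = f j.succ := congrArg Prod.fst hij
    have := hinj h1
    exact Fin.succ_injective k this
  have hdisj : Disjoint (Finset.univ.image ι) (Finset.univ.image ι') := by
    rw [Finset.disjoint_left]
    rintro p hp hp'
    simp only [Finset.mem_image, Finset.mem_univ, true_and] at hp hp'
    obtain ⟨i, hi⟩ := hp
    obtain ⟨j, hj⟩ := hp'
    rw [← hj] at hi
    have h1 : f i.castSucc = f j.succ := congrArg Prod.fst hi
    have h2 : f i.succ = f j.castSucc := congrArg Prod.snd hi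
    have e1 := hinj h1
    have e2 := hinj h2
    have c1 : (i : ℕ) = (j : ℕ) + 1 := by
      have := congrArg Fin.val e1; simpa using this
    have c2 : (i : ℕ) + 1 = (j : ℕ) := by
      have := congrArg Fin.val e2; simpa using this
    omega
  have hsum1 : ∑ p ∈ Finset.univ.image ι, g p = ∑ i : Fin k, g (ι i) :=
    Finset.sum_image (fun a _ b _ h => hιinj h)
  have hsum2 : ∑ p ∈ Finset.univ.image ι', g p = ∑ i : Fin k, g (ι' i) :=
    Finset.sum_image (fun a _ b _ h => hι'inj h)
  have hswap : ∀ i : Fin k, g (ι' i) = g (ι i) := by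
    intro i
    simp only [hg, hι, hι']
    rw [hsym]
    ring
  have hsub : ∑ p ∈ (Finset.univ.image ι ∪ Finset.univ.image ι'), g p ≤
      ∑ p : V × V, g p :=
    Finset.sum_le_sum_of_subset_of_nonneg (Finset.subset_univ _)
      (fun p _ _ => hgnn p)
  rw [Finset.sum_union hdisj, hsum1, hsum2] at hsub
  simp only [hswap] at hsub
  have hfull : ∑ p : V × V, g p = ∑ i, ∑ j, w i j * (x i - x j) ^ 2 := by
    rw [Fintype.sum_prod_type]
  have hι_eval : ∀ i : Fin k,
      g (ι i) = w (f i.castSucc) (f i.succ) * (x (f i.castSucc) - x (f i.succ)) ^ 2 :=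
    fun i => rfl
  simp only [hι_eval] at hsub
  unfold lapQF
  rw [← hfull]
  linarith

end Aux

/-- If `H_1, …, H_t` is a `t`-bundle of `α`-spanners of `G` with union `H`, then for every
edge `{u,v}` of `G` not in `H` and every `x : V → ℝ`,
`w_G(u,v)·(x u − x v)² ≤ (α/t)·Q_G(x)`. -/
theorem bundle_edge_quadform_bound {V : Type*} [Fintype V] [DecidableEq V]
    (wG : V → V → ℝ) (hG : IsWeightedGraph wG) (hn : 2 ≤ Fintype.card V)
    (α : ℝ) (hα : 1 ≤ α) {t : ℕ} (ht : 1 ≤ t)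
    (Hs : Fin t → V → V → ℝ) (hbundle : IsBundle α wG Hs)
    (u v : V) (he : 0 < wG u v) (hne : ∑ i, Hs i u v = 0) (x : V → ℝ) :
    wG u v * (x u - x v) ^ 2 ≤ (α / t) * lapQF wG x := by
  obtain ⟨hsymG, hdiagG, hnnG⟩ := hG
  obtain ⟨hsub, hdisj, hspan⟩ := hbundle
  have hHnn : ∀ i a b, 0 ≤ Hs i a b := by
    intro i a b
    rcases (hsub i).2 a b with h | h
    · rw [h]; exact hnnG a b
    · rw [h]
  have hall0 : ∀ i : Fin t, Hs i u v = 0 := by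
    intro i
    exact (Finset.sum_eq_zero_iff_of_nonneg (fun j _ => hHnn j u v)).1 hne i (Finset.mem_univ i)
  have hdel : ∀ i : Fin t, deleteBefore wG Hs i u v = wG u v := by
    intro i
    unfold deleteBefore
    rw [if_neg]
    push_neg
    intro j _
    simp [hall0 j]
  have htpos : (0:ℝ) < t := by exact_mod_cast ht
  have hQG : 0 ≤ lapQF wG x := lapQF_nonneg hnnG x
  have key : ∀ i : Fin t, wG u v * (x u - x v) ^ 2 ≤ α * lapQF (Hs i) x := by
    intro i
    obtain ⟨hsubi, hspani⟩ := hspan i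
    obtain ⟨k, f, ⟨hf0, hfl, hfinj, hfpos⟩, hstretch⟩ := hspani u v (by rw [hdel i]; exact he)
    rw [hdel i] at hstretch
    have hQi : 0 ≤ lapQF (Hs i) x := lapQF_nonneg (hHnn i) x
    have hcs := cs_path (Hs i) k f hfpos x
    rw [hf0, hfl] at hcs
    have hpathQ := path_sum_le_lapQF (Hs i) (hsub i).1 (hHnn i) k f hfinj x
    have hres : 0 ≤ pathRes (Hs i) k f :=
      Finset.sum_nonneg fun j _ => inv_nonneg.2 (hfpos j).le
    have h1 : (x u - x v) ^ 2 ≤ pathRes (Hs i) k f * lapQF (Hs i) x :=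
      hcs.trans (mul_le_mul_of_nonneg_left hpathQ hres)
    calc wG u v * (x u - x v) ^ 2 ≤ wG u v * (pathRes (Hs i) k f * lapQF (Hs i) x) :=
          mul_le_mul_of_nonneg_left h1 (hnnG u v)
      _ = (wG u v * pathRes (Hs i) k f) * lapQF (Hs i) x := by ring
      _ ≤ α * lapQF (Hs i) x := mul_le_mul_of_nonneg_right hstretch hQi
  have hsumQ : ∑ i, lapQF (Hs i) x = lapQF (fun a b => ∑ i, Hs i a b) x := by
    unfold lapQF
    rw [← Finset.mul_sum]
    congr 1
    rw [Finset.sum_comm]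
    refine Finset.sum_congr rfl fun a _ => ?_
    rw [Finset.sum_comm]
    refine Finset.sum_congr rfl fun b _ => ?_
    rw [Finset.sum_mul]
  have hpt : ∀ a b, ∑ i, Hs i a b ≤ wG a b := by
    intro a b
    by_cases hz : ∀ i, Hs i a b = 0
    · rw [Finset.sum_eq_zero (fun i _ => hz i)]; exact hnnG a b
    · push_neg at hz
      obtain ⟨i0, hi0⟩ := hz
      have hs : ∑ i, Hs i a b = Hs i0 a b := by
        refine Finset.sum_eq_single i0 (fun j _ hj => ?_) (fun h => absurd (Finset.mem_univ i0) h)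
        rcases hdisj j i0 hj a b with h | h
        · exact h
        · exact absurd h hi0
      rw [hs]
      rcases (hsub i0).2 a b with h | h
      · rw [h]
      · exact absurd h hi0
  have hsum_le : ∑ i, lapQF (Hs i) x ≤ lapQF wG x := by
    rw [hsumQ]; exact lapQF_mono hpt x
  have hkey2 : (t : ℝ) * (wG u v * (x u - x v) ^ 2) ≤ α * lapQF wG x := by
    calc (t : ℝ) * (wG u v * (x u - x v) ^ 2)
        = ∑ _i : Fin t, wG u v * (x u - x v) ^ 2 := by
          rw [Finset.sum_const, Finset.card_univ, Fintype.card_fin, nsmul_eq_mul]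
      _ ≤ ∑ i, α * lapQF (Hs i) x := Finset.sum_le_sum fun i _ => key i
      _ = α * ∑ i, lapQF (Hs i) x := by rw [Finset.mul_sum]
      _ ≤ α * lapQF wG x := mul_le_mul_of_nonneg_left hsum_le (le_trans zero_le_one hα)
  rw [div_mul_eq_mul_div, le_div_iff₀ htpos]
  linarith
end

section
/- Let G be a weighted graph on n ≥ 2 vertices, let α ≥ 1 and t ≥ 1, and let H_1, …, H_t be a t-bundle of α-spanners of G with union H. Then for every edge e = {u,v} of G that is not an edge of H, the effective resistance satisfies w_G(u,v)·R_e[G] ≤ α/t. -/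
/-- The effective resistance between `u` and `v`:
`R_{u,v}[G] = sup { (x u − x v)² / Q_G(x) : Q_G(x) > 0 }`. -/
noncomputable def effRes {V : Type*} [Fintype V] (w : V → V → ℝ) (u v : V) : ℝ :=
  sSup {r : ℝ | ∃ x : V → ℝ, 0 < lapQF w x ∧ r = (x u - x v) ^ 2 / lapQF w x}

-- telescoping
lemma telescope_aux {k : ℕ} (y : Fin (k + 1) → ℝ) :
    ∑ i : Fin k, (y i.castSucc - y i.succ) = y 0 - y (Fin.last k) := by
  induction k with
  | zero => simp
  | succ k ih =>
    rw [Fin.sum_univ_castSucc]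
    have h := ih (fun j => y j.castSucc)
    have h2 : ∑ i : Fin k, (y (i.castSucc).castSucc - y (i.castSucc).succ)
        = y 0 - y (Fin.last k).castSucc := by
      rw [Fin.castSucc_zero] at h
      rw [← h]
      refine Finset.sum_congr rfl fun i _ => ?_
      rw [Fin.succ_castSucc]
    rw [h2, Fin.succ_last]
    ring

-- sum over path edges bounded by lapQF
lemma edge_sum_le_lapQF {V : Type*} [Fintype V] [DecidableEq V] (w : V → V → ℝ)
    (hsym : ∀ a b, w a b = w b a) (hnn : ∀ a b, 0 ≤ w a b)
    {k : ℕ} (f : Fin (k + 1) → V) (hinj : Function.Injective f) (x : V → ℝ) :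
    ∑ i : Fin k, w (f i.castSucc) (f i.succ) * (x (f i.castSucc) - x (f i.succ)) ^ 2
      ≤ lapQF w x := by
  classical
  set F : V × V → ℝ := fun p => w p.1 p.2 * (x p.1 - x p.2) ^ 2 with hF
  have hFnn : ∀ p : V × V, 0 ≤ F p := fun p => mul_nonneg (hnn _ _) (sq_nonneg _)
  set ι1 : Fin k → V × V := fun i => (f i.castSucc, f i.succ) with hι1
  set ι2 : Fin k → V × V := fun i => (f i.succ, f i.castSucc) with hι2
  have hinj1 : Function.Injective ι1 := by
    intro a b hab
    have h1 : f a.castSucc = f b.castSucc := congrArg Prod.fst hab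
    have := hinj h1
    exact Fin.castSucc_injective _ this
  have hinj2 : Function.Injective ι2 := by
    intro a b hab
    have h1 : f a.succ = f b.succ := congrArg Prod.fst hab
    exact Fin.succ_injective _ (hinj h1)
  set S : Finset (V × V) := Finset.univ.image ι1
  set T : Finset (V × V) := Finset.univ.image ι2
  have hdisj : Disjoint S T := by
    rw [Finset.disjoint_left]
    rintro p hpS hpT
    simp only [S, T, Finset.mem_image, Finset.mem_univ, true_and] at hpS hpT
    obtain ⟨a, ha⟩ := hpS
    obtain ⟨b, hb⟩ := hpT
    have h1 : f a.castSucc = f b.succ := by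
      have := ha.trans hb.symm
      exact congrArg Prod.fst this
    have h2 : f a.succ = f b.castSucc := by
      have := ha.trans hb.symm
      exact congrArg Prod.snd this
    have e1 := hinj h1
    have e2 := hinj h2
    have v1 := congrArg Fin.val e1
    have v2 := congrArg Fin.val e2
    simp [Fin.val_succ] at v1 v2
    omega
  have hsumS : ∑ p ∈ S, F p
      = ∑ i : Fin k, w (f i.castSucc) (f i.succ) * (x (f i.castSucc) - x (f i.succ)) ^ 2 := by
    rw [Finset.sum_image (fun a _ b _ h => hinj1 h)]
  have hsumT : ∑ p ∈ T, F p
      = ∑ i : Fin k, w (f i.castSucc) (f i.succ) * (x (f i.castSucc) - x (f i.succ)) ^ 2 := by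
    rw [Finset.sum_image (fun a _ b _ h => hinj2 h)]
    refine Finset.sum_congr rfl fun i _ => ?_
    simp only [F, ι2]
    rw [hsym (f i.succ) (f i.castSucc)]
    ring
  have htotal : ∑ p : V × V, F p = ∑ a : V, ∑ b : V, w a b * (x a - x b) ^ 2 := by
    rw [← Finset.sum_product']
    rfl
  have hle : ∑ p ∈ S ∪ T, F p ≤ ∑ p : V × V, F p :=
    Finset.sum_le_sum_of_subset_of_nonneg (Finset.subset_univ _)
      (fun p _ _ => hFnn p)
  rw [Finset.sum_union hdisj, hsumS, hsumT] at hle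
  rw [htotal] at hle
  unfold lapQF
  linarith
-- lapQF nonneg
lemma lapQF_nonneg_s3 {V : Type*} [Fintype V] (w : V → V → ℝ) (hnn : ∀ a b, 0 ≤ w a b)
    (x : V → ℝ) : 0 ≤ lapQF w x := by
  unfold lapQF
  have : (0:ℝ) ≤ ∑ i, ∑ j, w i j * (x i - x j) ^ 2 :=
    Finset.sum_nonneg fun i _ => Finset.sum_nonneg fun j _ =>
      mul_nonneg (hnn i j) (sq_nonneg _)
  linarith

-- path Cauchy-Schwarz bound
lemma path_bound {V : Type*} [Fintype V] [DecidableEq V] (w : V → V → ℝ)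
    (hsym : ∀ a b, w a b = w b a) (hnn : ∀ a b, 0 ≤ w a b)
    {u v : V} {k : ℕ} {f : Fin (k + 1) → V} (hp : IsPathIn w u v k f) (x : V → ℝ) :
    (x u - x v) ^ 2 ≤ pathRes w k f * lapQF w x := by
  obtain ⟨h0, hlast, hinj, hpos⟩ := hp
  set d : Fin k → ℝ := fun i => x (f i.castSucc) - x (f i.succ) with hd
  set wi : Fin k → ℝ := fun i => w (f i.castSucc) (f i.succ) with hwi
  have htel : x u - x v = ∑ i : Fin k, d i := by
    rw [← h0, ← hlast, ← telescope_aux (fun j => x (f j))]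
  have hcs : (∑ i : Fin k, d i) ^ 2
      ≤ (∑ i : Fin k, (wi i)⁻¹) * ∑ i : Fin k, wi i * d i ^ 2 := by
    have := Finset.sum_mul_sq_le_sq_mul_sq Finset.univ
      (fun i => Real.sqrt (wi i)⁻¹) (fun i => Real.sqrt (wi i) * d i)
    calc (∑ i : Fin k, d i) ^ 2
        = (∑ i : Fin k, Real.sqrt (wi i)⁻¹ * (Real.sqrt (wi i) * d i)) ^ 2 := by
          congr 1
          refine Finset.sum_congr rfl fun i _ => ?_
          rw [← mul_assoc, ← Real.sqrt_mul (inv_nonneg.2 (le_of_lt (hpos i)))]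
          rw [inv_mul_cancel₀ (ne_of_gt (hpos i))]
          simp
      _ ≤ (∑ i : Fin k, Real.sqrt (wi i)⁻¹ ^ 2) * ∑ i : Fin k, (Real.sqrt (wi i) * d i) ^ 2 :=
          this
      _ = (∑ i : Fin k, (wi i)⁻¹) * ∑ i : Fin k, wi i * d i ^ 2 := by
          congr 1
          · refine Finset.sum_congr rfl fun i _ => ?_
            exact Real.sq_sqrt (inv_nonneg.2 (le_of_lt (hpos i)))
          · refine Finset.sum_congr rfl fun i _ => ?_
            rw [mul_pow, Real.sq_sqrt (le_of_lt (hpos i))]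
  have hedge : ∑ i : Fin k, wi i * d i ^ 2 ≤ lapQF w x :=
    edge_sum_le_lapQF w hsym hnn f hinj x
  have hres_nn : 0 ≤ ∑ i : Fin k, (wi i)⁻¹ :=
    Finset.sum_nonneg fun i _ => inv_nonneg.2 (le_of_lt (hpos i))
  calc (x u - x v) ^ 2 = (∑ i : Fin k, d i) ^ 2 := by rw [htel]
    _ ≤ (∑ i : Fin k, (wi i)⁻¹) * ∑ i : Fin k, wi i * d i ^ 2 := hcs
    _ ≤ (∑ i : Fin k, (wi i)⁻¹) * lapQF w x := by
        exact mul_le_mul_of_nonneg_left hedge hres_nn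
    _ = pathRes w k f * lapQF w x := rfl

/-- If `H_1, …, H_t` is a `t`-bundle of `α`-spanners of `G` with union `H`, then every
edge `{u,v}` of `G` not in `H` satisfies `w_G(u,v) · R_e[G] ≤ α / t`. -/
theorem bundle_effRes_bound {V : Type*} [Fintype V] [DecidableEq V]
    (wG : V → V → ℝ) (hG : IsWeightedGraph wG) (hn : 2 ≤ Fintype.card V)
    (α : ℝ) (hα : 1 ≤ α) {t : ℕ} (ht : 1 ≤ t)
    (Hs : Fin t → V → V → ℝ) (hbundle : IsBundle α wG Hs)
    (u v : V) (he : 0 < wG u v) (hne : ∑ i, Hs i u v = 0) :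
    wG u v * effRes wG u v ≤ α / t := by
  classical
  obtain ⟨hsymG, hdiagG, hnnG⟩ := hG
  obtain ⟨hsub, hdisj, hspan⟩ := hbundle
  have hHnn : ∀ i a b, 0 ≤ Hs i a b := by
    intro i a b
    rcases (hsub i).2 a b with h | h
    · rw [h]; exact hnnG a b
    · rw [h]
  have hzero : ∀ j, Hs j u v = 0 := fun j =>
    (Finset.sum_eq_zero_iff_of_nonneg (fun j' _ => hHnn j' u v)).mp hne j (Finset.mem_univ j)
  have hdel : ∀ i, deleteBefore wG Hs i u v = wG u v := by
    intro i
    unfold deleteBefore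
    rw [if_neg]
    rintro ⟨j, _, hj⟩
    exact hj (hzero j)
  have htpos : (0:ℝ) < t := by exact_mod_cast Nat.lt_of_lt_of_le Nat.zero_lt_one ht
  -- pointwise bound on union
  have hpt : ∀ a b, ∑ i, Hs i a b ≤ wG a b := by
    intro a b
    by_cases hall : ∀ i, Hs i a b = 0
    · rw [Finset.sum_eq_zero (fun i _ => hall i)]; exact hnnG a b
    · push_neg at hall
      obtain ⟨i₀, hi₀⟩ := hall
      have hsum : ∑ i, Hs i a b = Hs i₀ a b := by
        refine Finset.sum_eq_single i₀ (fun j _ hj => ?_) (fun h => absurd (Finset.mem_univ i₀) h)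
        rcases hdisj j i₀ hj a b with h | h
        · exact h
        · exact absurd h hi₀
      rw [hsum]
      rcases (hsub i₀).2 a b with h | h
      · rw [h]
      · exact absurd h hi₀
  -- sum of quadratic forms bounded by QF of G
  have hQsum : ∀ x : V → ℝ, ∑ i, lapQF (Hs i) x ≤ lapQF wG x := by
    intro x
    unfold lapQF
    rw [← Finset.mul_sum]
    have : ∑ i : Fin t, ∑ a : V, ∑ b : V, Hs i a b * (x a - x b) ^ 2
        ≤ ∑ a : V, ∑ b : V, wG a b * (x a - x b) ^ 2 := by
      rw [Finset.sum_comm]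
      refine Finset.sum_le_sum fun a _ => ?_
      rw [Finset.sum_comm]
      refine Finset.sum_le_sum fun b _ => ?_
      rw [← Finset.sum_mul]
      exact mul_le_mul_of_nonneg_right (hpt a b) (sq_nonneg _)
    linarith
  -- key inequality per x
  have hkey : ∀ x : V → ℝ, (t:ℝ) * (wG u v * (x u - x v) ^ 2) ≤ α * lapQF wG x := by
    intro x
    have hterm : ∀ i : Fin t, wG u v * (x u - x v) ^ 2 ≤ α * lapQF (Hs i) x := by
      intro i
      obtain ⟨k, f, hpath, hle⟩ := (hspan i).2 u v (by rw [hdel i]; exact he)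
      rw [hdel i] at hle
      have hsymH : ∀ a b, Hs i a b = Hs i b a := (hsub i).1
      have hb := path_bound (Hs i) hsymH (hHnn i) hpath x
      have hQnn : 0 ≤ lapQF (Hs i) x := lapQF_nonneg_s3 _ (hHnn i) x
      calc wG u v * (x u - x v) ^ 2
          ≤ wG u v * (pathRes (Hs i) k f * lapQF (Hs i) x) :=
            mul_le_mul_of_nonneg_left hb (le_of_lt he)
        _ = (wG u v * pathRes (Hs i) k f) * lapQF (Hs i) x := by ring
        _ ≤ α * lapQF (Hs i) x := mul_le_mul_of_nonneg_right hle hQnn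
    calc (t:ℝ) * (wG u v * (x u - x v) ^ 2)
        = ∑ _i : Fin t, wG u v * (x u - x v) ^ 2 := by
          rw [Finset.sum_const, Finset.card_univ, Fintype.card_fin, nsmul_eq_mul]
      _ ≤ ∑ i : Fin t, α * lapQF (Hs i) x := Finset.sum_le_sum fun i _ => hterm i
      _ = α * ∑ i : Fin t, lapQF (Hs i) x := by rw [Finset.mul_sum]
      _ ≤ α * lapQF wG x :=
          mul_le_mul_of_nonneg_left (hQsum x) (le_trans zero_le_one hα)
  have hbound : effRes wG u v ≤ α / (t * wG u v) := by
    apply Real.sSup_le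
    · rintro r ⟨x, hQ, rfl⟩
      rw [div_le_div_iff₀ hQ (mul_pos htpos he)]
      have := hkey x
      nlinarith
    · positivity
  calc wG u v * effRes wG u v ≤ wG u v * (α / (t * wG u v)) :=
        mul_le_mul_of_nonneg_left hbound (le_of_lt he)
    _ = α / t := by field_simp
end

section
/- (Existence of spanners) Let G be a weighted graph on n ≥ 2 vertices and let k ≥ 1 be an integer. Then there exists a subgraph H of G (carrying the same weights on a subset of the edges of G) with at most n + n^{1+1/k} edges such that st_H(e) ≤ 2k − 1 for every edge e of G; in particular H is a (2k−1)-spanner of G. -/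
open scoped Classical in
/-- The number of edges of a weighted graph: the number of unordered pairs with positive
weight, counted as half the number of ordered pairs with positive weight. -/
noncomputable def edgeCount {V : Type*} [Fintype V] (w : V → V → ℝ) : ℝ :=
  ((Finset.univ.filter fun p : V × V => 0 < w p.1 p.2).card : ℝ) / 2

open SimpleGraph

namespace SpannerAux

variable {V : Type*}

def UShort (g : SimpleGraph V) (k : ℕ) : Prop :=
  ∀ ⦃u v : V⦄ (p q : g.Walk u v), p.IsPath → q.IsPath → p.length + q.length ≤ 2 * k → p = q

lemma UShort.anti {g g' : SimpleGraph V} {k : ℕ} (hle : g ≤ g') (h : UShort g' k) :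
    UShort g k := by
  intro u v p q hp hq hlen
  have := h (p.mapLe hle) (q.mapLe hle) (hp.mapLe hle) (hq.mapLe hle)
    (by simpa using hlen)
  exact Walk.map_injective_of_injective (fun a b hab => hab) u v this

def toWalk (g : SimpleGraph V) : ∀ (m : ℕ) (f : Fin (m + 1) → V),
    (∀ j : Fin m, g.Adj (f j.castSucc) (f j.succ)) → g.Walk (f 0) (f (Fin.last m))
  | 0, _f, _ => Walk.nil
  | m + 1, f, h =>
    Walk.cons (by simpa using h 0)
      ((toWalk g m (f ∘ Fin.succ) (fun j => by
          simpa only [Function.comp_apply, Fin.succ_castSucc] using h j.succ)).copy rfl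
        (by simp [Function.comp, Fin.succ_last]))

lemma support_toWalk (g : SimpleGraph V) : ∀ (m : ℕ) (f : Fin (m + 1) → V)
    (h : ∀ j : Fin m, g.Adj (f j.castSucc) (f j.succ)),
    (toWalk g m f h).support = List.ofFn f
  | 0, f, _ => by simp [toWalk, List.ofFn_succ]
  | m + 1, f, h => by
    show (Walk.cons _ _).support = _
    rw [Walk.support_cons, Walk.support_copy,
      support_toWalk g m (f ∘ Fin.succ) _]
    rw [List.ofFn_succ (f := f)]
    rfl

lemma length_toWalk (g : SimpleGraph V) (m : ℕ) (f : Fin (m + 1) → V)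
    (h : ∀ j : Fin m, g.Adj (f j.castSucc) (f j.succ)) :
    (toWalk g m f h).length = m := by
  have := congrArg List.length (support_toWalk g m f h)
  simpa [Walk.length_support] using this

lemma isPath_toWalk (g : SimpleGraph V) (m : ℕ) (f : Fin (m + 1) → V)
    (h : ∀ j : Fin m, g.Adj (f j.castSucc) (f j.succ)) (hf : Function.Injective f) :
    (toWalk g m f h).IsPath := by
  rw [Walk.isPath_def, support_toWalk]
  exact List.nodup_ofFn.mpr hf

lemma exists_fn_of_walk {g : SimpleGraph V} {u v : V} (p : g.Walk u v) (hp : p.IsPath) :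
    ∃ f : Fin (p.length + 1) → V, f 0 = u ∧ f (Fin.last p.length) = v ∧
      Function.Injective f ∧ ∀ j : Fin p.length, g.Adj (f j.castSucc) (f j.succ) := by
  have hlen : p.support.length = p.length + 1 := p.length_support
  refine ⟨fun j => p.support.get (Fin.cast hlen.symm j), ?_, ?_, ?_, ?_⟩
  · have h0 : p.support.get (Fin.cast hlen.symm 0) = p.support.head (by simp) := by
      rw [List.head_eq_getElem_zero, List.get_eq_getElem]
      rfl
    show p.support.get (Fin.cast hlen.symm 0) = u
    rw [h0]
    exact p.head_support
  · have hl : p.support.get (Fin.cast hlen.symm (Fin.last p.length)) =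
        p.support.getLast (by simp) := by
      rw [List.getLast_eq_getElem, List.get_eq_getElem]
      congr 1
      simp [hlen]
    show p.support.get (Fin.cast hlen.symm (Fin.last p.length)) = v
    rw [hl]
    exact p.getLast_support
  · intro a b hab
    have hnd := hp.support_nodup
    have := List.nodup_iff_injective_get.mp hnd hab
    exact Fin.cast_injective _ this
  · intro j
    have hc := p.isChain_adj_support
    have hj := j.isLt
    have := List.isChain_iff_getElem.mp hc j.1 (by rw [hlen]; omega)
    exact this

lemma exists_split {g : SimpleGraph V} {u v : V} (p : g.Walk u v) {e : Sym2 V}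
    (he : e ∈ p.edges) :
    ∃ (a b : V) (hab : g.Adj a b) (q₁ : g.Walk u a) (q₂ : g.Walk b v),
      s(a, b) = e ∧ p = q₁.append (Walk.cons hab q₂) := by
  induction p with
  | nil => simp at he
  | @cons u w v h p ih =>
    rw [Walk.edges_cons, List.mem_cons] at he
    rcases he with he | he
    · exact ⟨u, w, h, Walk.nil, p, he.symm, by simp⟩
    · obtain ⟨a, b, hab, q₁, q₂, h1, h2⟩ := ih he
      exact ⟨a, b, hab, Walk.cons h q₁, q₂, h1, by rw [h2]; simp⟩

lemma not_mem_of_nodup_split {α : Type*} {l₁ l₂ : List α} {a : α}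
    (h : (l₁ ++ a :: l₂).Nodup) : a ∉ l₁ ∧ a ∉ l₂ := by
  rw [List.nodup_append] at h
  obtain ⟨-, h2, h3⟩ := h
  exact ⟨fun hmem => h3 a hmem a (by simp) rfl, (List.nodup_cons.mp h2).1⟩

lemma isPath_of_append_cons {g : SimpleGraph V} {u a b v : V} {q₁ : g.Walk u a}
    {hab : g.Adj a b} {q₂ : g.Walk b v} (h : (q₁.append (Walk.cons hab q₂)).IsPath) :
    q₁.IsPath ∧ q₂.IsPath ∧ s(a, b) ∉ q₁.edges ∧ s(a, b) ∉ q₂.edges := by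
  have hsupp : (q₁.append (Walk.cons hab q₂)).support = q₁.support ++ q₂.support := by
    rw [Walk.support_append, Walk.support_cons]
    rfl
  have hnd : (q₁.support ++ q₂.support).Nodup := by rw [← hsupp]; exact h.support_nodup
  rw [List.nodup_append] at hnd
  have hedges : (q₁.append (Walk.cons hab q₂)).edges = q₁.edges ++ s(a, b) :: q₂.edges := by
    rw [Walk.edges_append, Walk.edges_cons]
  have hend : (q₁.edges ++ s(a, b) :: q₂.edges).Nodup := hedges ▸ h.isTrail.edges_nodup
  obtain ⟨he1, he2⟩ := not_mem_of_nodup_split hend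
  exact ⟨Walk.isPath_def _ |>.mpr hnd.1, Walk.isPath_def _ |>.mpr hnd.2.1, he1, he2⟩

lemma transfer_back {g g' : SimpleGraph V} (hle : g ≤ g') {a b : V}
    (w1 w2 : g'.Walk a b) (h1 : ∀ e ∈ w1.edges, e ∈ g.edgeSet)
    (h2 : ∀ e ∈ w2.edges, e ∈ g.edgeSet) (heq : w1.transfer g h1 = w2.transfer g h2) :
    w1 = w2 := by
  have := congrArg (fun w : g.Walk a b =>
    w.transfer g' (fun e he => edgeSet_mono hle (w.edges_subset_edgeSet he))) heq
  simpa [Walk.transfer_transfer, Walk.transfer_self] using this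

lemma UShort.insert_edge {g g' : SimpleGraph V} {k : ℕ} {x y : V}
    (hle : g ≤ g')
    (hadj : ∀ a b : V, g'.Adj a b → g.Adj a b ∨ s(a, b) = s(x, y))
    (hU : UShort g k)
    (h2 : ∀ w : g.Walk x y, ¬ (w.length + 1 ≤ 2 * k)) :
    UShort g' k := by
  have h2' : ∀ a b : V, s(a, b) = s(x, y) → ∀ w : g.Walk a b, ¬ (w.length + 1 ≤ 2 * k) := by
    intro a b hab w hw
    rcases Sym2.eq_iff.mp hab with ⟨rfl, rfl⟩ | ⟨rfl, rfl⟩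
    · exact h2 w hw
    · exact h2 w.reverse (by simpa using hw)
  have hedge : ∀ {a b : V} (w : g'.Walk a b), s(x, y) ∉ w.edges →
      ∀ e ∈ w.edges, e ∈ g.edgeSet := by
    intro a b w hw e he
    induction e using Sym2.ind with
    | _ c d =>
      rcases hadj c d (w.edges_subset_edgeSet he) with h | h
      · exact h
      · exact absurd (h ▸ he) hw
  have oneside : ∀ {u v : V} (p q : g'.Walk u v), p.IsPath → s(x, y) ∈ p.edges →
      s(x, y) ∉ q.edges → p.length + q.length ≤ 2 * k → False := by
    intro u v p q hp hpE hqE hlen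
    obtain ⟨a, b, hab, p₁, p₂, habe, hpeq⟩ := exists_split p hpE
    obtain ⟨hp₁, hp₂, hpe₁, hpe₂⟩ := isPath_of_append_cons (hpeq ▸ hp)
    rw [habe] at hpe₁ hpe₂
    have hplen : p.length = p₁.length + (p₂.length + 1) := by
      rw [hpeq]; simp [Walk.length_append]
    set W : g'.Walk a b := p₁.reverse.append (q.append p₂.reverse) with hW
    have hWE : s(x, y) ∉ W.edges := by
      intro hmem
      simp only [hW, Walk.edges_append, Walk.edges_reverse, List.mem_append,
        List.mem_reverse] at hmem
      rcases hmem with h | h | h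
      · exact hpe₁ h
      · exact hqE h
      · exact hpe₂ h
    have hWlen : W.length = p₁.length + (q.length + p₂.length) := by
      simp [hW, Walk.length_append]
    exact h2' a b habe (W.transfer g (hedge W hWE))
      (by rw [Walk.length_transfer, hWlen]; omega)
  intro u v p q hp hq hlen
  by_cases hpE : s(x, y) ∈ p.edges
  · by_cases hqE : s(x, y) ∈ q.edges
    · obtain ⟨a, b, hab, p₁, p₂, habe, hpeq⟩ := exists_split p hpE
      obtain ⟨a', b', hab', q₁, q₂, habe', hqeq⟩ := exists_split q hqE
      obtain ⟨hp₁, hp₂, hpe₁, hpe₂⟩ := isPath_of_append_cons (hpeq ▸ hp)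
      obtain ⟨hq₁, hq₂, hqe₁, hqe₂⟩ := isPath_of_append_cons (hqeq ▸ hq)
      rw [habe] at hpe₁ hpe₂
      rw [habe'] at hqe₁ hqe₂
      have hplen : p.length = p₁.length + (p₂.length + 1) := by
        rw [hpeq]; simp [Walk.length_append]
      have hqlen : q.length = q₁.length + (q₂.length + 1) := by
        rw [hqeq]; simp [Walk.length_append]
      rcases Sym2.eq_iff.mp (habe.trans habe'.symm) with ⟨rfl, rfl⟩ | ⟨rfl, rfl⟩
      · -- same orientation
        have e1 : p₁ = q₁ := by
          refine transfer_back hle p₁ q₁ (hedge p₁ hpe₁) (hedge q₁ hqe₁) ?_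
          exact hU _ _ (hp₁.transfer _) (hq₁.transfer _)
            (by rw [Walk.length_transfer, Walk.length_transfer]; omega)
        have e2 : p₂ = q₂ := by
          refine transfer_back hle p₂ q₂ (hedge p₂ hpe₂) (hedge q₂ hqe₂) ?_
          exact hU _ _ (hp₂.transfer _) (hq₂.transfer _)
            (by rw [Walk.length_transfer, Walk.length_transfer]; omega)
        rw [hpeq, hqeq, e1, e2]
      · -- opposite orientation
        exfalso
        have hWE : s(x, y) ∉ (p₁.reverse.append q₁).edges := by
          intro hmem
          simp only [Walk.edges_append, Walk.edges_reverse, List.mem_append,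
            List.mem_reverse] at hmem
          rcases hmem with h | h
          · exact hpe₁ h
          · exact hqe₁ h
        exact h2' _ _ habe ((p₁.reverse.append q₁).transfer g (hedge _ hWE))
          (by rw [Walk.length_transfer]; simp only [Walk.length_append,
            Walk.length_reverse]; omega)
    · exact absurd (oneside p q hp hpE hqE hlen) (by simp)
  · by_cases hqE : s(x, y) ∈ q.edges
    · exact absurd (oneside q p hq hqE hpE (by omega)) (by simp)
    · refine transfer_back hle p q (hedge p hpE) (hedge q hqE) ?_
      exact hU _ _ (hp.transfer _) (hq.transfer _)
        (by rw [Walk.length_transfer, Walk.length_transfer]; omega)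

section Count

variable [Fintype V] [DecidableEq V]

open scoped Classical in
noncomputable def pathSet (g : SimpleGraph V) (r : V) (i : ℕ) : Finset (Fin (i + 1) → V) :=
  Finset.univ.filter (fun f => f 0 = r ∧ Function.Injective f ∧
    ∀ j : Fin i, g.Adj (f j.castSucc) (f j.succ))

lemma mem_pathSet {g : SimpleGraph V} {r : V} {i : ℕ} {f : Fin (i + 1) → V} :
    f ∈ pathSet g r i ↔ f 0 = r ∧ Function.Injective f ∧
      ∀ j : Fin i, g.Adj (f j.castSucc) (f j.succ) := by
  classical
  simp [pathSet]

lemma last_mem_of_pathSet {g : SimpleGraph V} {A : Finset V}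
    (hin : ∀ a b, g.Adj a b → a ∈ A ∧ b ∈ A) {r : V} {i : ℕ} (hi : 1 ≤ i)
    {f : Fin (i + 1) → V} (hf : f ∈ pathSet g r i) : f (Fin.last i) ∈ A := by
  obtain ⟨-, -, hfa⟩ := mem_pathSet.mp hf
  have hadj := hfa ⟨i - 1, by omega⟩
  have hsucc : (Fin.succ (⟨i - 1, by omega⟩ : Fin i)) = Fin.last i := by
    apply Fin.ext; simp [Fin.val_succ]; omega
  rw [hsucc] at hadj
  exact (hin _ _ hadj).2

lemma card_pathSet_endpoint {g : SimpleGraph V} {k : ℕ} (hU : UShort g k) (hk : 1 ≤ k)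
    {A : Finset V} (hin : ∀ a b, g.Adj a b → a ∈ A ∧ b ∈ A) (r : V) :
    (pathSet g r k).card ≤ (A.erase r).card := by
  apply Finset.card_le_card_of_injOn (fun f => f (Fin.last k))
  · intro f hf
    obtain ⟨hf0, hfi, hfa⟩ := mem_pathSet.mp hf
    refine Finset.mem_erase.mpr ⟨?_, last_mem_of_pathSet hin hk hf⟩
    intro hlast
    have : (Fin.last k) = 0 := hfi (hlast.trans hf0.symm)
    have := congrArg Fin.val this
    simp [Fin.val_last] at this
    omega
  · intro f hf f' hf' hend
    obtain ⟨hf0, hfi, hfa⟩ := mem_pathSet.mp hf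
    obtain ⟨hf0', hfi', hfa'⟩ := mem_pathSet.mp hf'
    have hend' : f' (Fin.last k) = f (Fin.last k) := hend.symm
    have heq := hU ((toWalk g k f hfa).copy hf0 rfl)
      (((toWalk g k f' hfa').copy hf0' hend'))
      (by rw [Walk.isPath_copy]; exact isPath_toWalk g k f hfa hfi)
      (by rw [Walk.isPath_copy]; exact isPath_toWalk g k f' hfa' hfi')
      (by rw [Walk.length_copy, Walk.length_copy, length_toWalk, length_toWalk]; omega)
    have hsupp := congrArg Walk.support heq
    rw [Walk.support_copy, Walk.support_copy, support_toWalk, support_toWalk] at hsupp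
    exact List.ofFn_injective hsupp

lemma snoc_inj {n : ℕ} {W : Type*} {f : Fin n → W} {w : W} (hf : Function.Injective f)
    (hw : ∀ j, f j ≠ w) : Function.Injective (Fin.snoc f w : Fin (n + 1) → W) := by
  intro a b hab
  induction a using Fin.lastCases with
  | last =>
    induction b using Fin.lastCases with
    | last => rfl
    | cast jb =>
      rw [Fin.snoc_last, Fin.snoc_castSucc] at hab
      exact absurd hab.symm (hw jb)
  | cast ja =>
    induction b using Fin.lastCases with
    | last =>
      rw [Fin.snoc_last, Fin.snoc_castSucc] at hab
      exact absurd hab (hw ja)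
    | cast jb =>
      rw [Fin.snoc_castSucc, Fin.snoc_castSucc] at hab
      rw [hf hab]

lemma pathSet_base {g : SimpleGraph V} [DecidableRel g.Adj] (r : V) :
    g.degree r ≤ (pathSet g r 1).card := by
  rw [← SimpleGraph.card_neighborFinset_eq_degree]
  apply Finset.card_le_card_of_injOn (fun w => ![r, w])
  · intro w hw
    rw [Finset.mem_coe, SimpleGraph.mem_neighborFinset] at hw
    refine mem_pathSet.mpr ⟨rfl, ?_, ?_⟩
    · intro a b hab
      fin_cases a <;> fin_cases b <;> simp_all <;> exact hw.ne' (by simpa using hab)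
    · intro j
      fin_cases j
      simpa using hw
  · intro w _ w' _ hww
    have := congrArg (fun f : Fin 2 → V => f 1) hww
    simpa using this

lemma pathSet_step {g : SimpleGraph V} [DecidableRel g.Adj] {k : ℕ} (hU : UShort g k) {r : V}
    {i : ℕ} (hi : 1 ≤ i) (hik : i + 1 ≤ k) (δ : ℝ)
    (hdeg : ∀ f ∈ pathSet g r i, δ ≤ ((g.neighborFinset (f (Fin.last i))).card : ℝ)) :
    (δ - 1) * ((pathSet g r i).card : ℝ) ≤ ((pathSet g r (i + 1)).card : ℝ) := by
  classical
  set ext : (Fin (i + 1) → V) → Finset V := fun f =>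
    g.neighborFinset (f (Fin.last i)) \ Finset.univ.image f with hext
  have hcard_ext : ∀ f ∈ pathSet g r i, (δ - 1 : ℝ) ≤ ((ext f).card : ℝ) := by
    intro f hf
    obtain ⟨hf0, hfi, hfa⟩ := mem_pathSet.mp hf
    have hsub : g.neighborFinset (f (Fin.last i)) ∩ Finset.univ.image f ⊆
        {f ⟨i - 1, by omega⟩} := by
      intro w hw
      rw [Finset.mem_inter, SimpleGraph.mem_neighborFinset] at hw
      obtain ⟨hadj, hwim⟩ := hw
      obtain ⟨j, -, rfl⟩ := Finset.mem_image.mp hwim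
      rw [Finset.mem_singleton]
      by_contra hne
      have hjlast : j ≠ Fin.last i := by
        rintro rfl
        exact g.irrefl hadj
      have hjv : j.1 + 1 < i := by
        have h1 := j.isLt
        have h2 : j.1 ≠ i := fun h => hjlast (Fin.ext h)
        have h3 : j.1 ≠ i - 1 := fun h => hne (congrArg f (Fin.ext h))
        omega
      have hseg_adj : ∀ t : Fin (i - j.1),
          g.Adj ((fun t : Fin (i - j.1 + 1) => f ⟨j.1 + t.1, by omega⟩) t.castSucc)
            ((fun t : Fin (i - j.1 + 1) => f ⟨j.1 + t.1, by omega⟩) t.succ) := by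
        intro t
        have h1 : (fun t : Fin (i - j.1 + 1) => f ⟨j.1 + t.1, by omega⟩) t.castSucc =
            f (Fin.castSucc ⟨j.1 + t.1, by omega⟩) := congrArg f (Fin.ext (by simp))
        have h2 : (fun t : Fin (i - j.1 + 1) => f ⟨j.1 + t.1, by omega⟩) t.succ =
            f (Fin.succ ⟨j.1 + t.1, by omega⟩) :=
          congrArg f (Fin.ext (by simp [Fin.val_succ, Nat.add_assoc]))
        rw [h1, h2]
        exact hfa _
      have hseg_inj : Function.Injective
          (fun t : Fin (i - j.1 + 1) => f ⟨j.1 + t.1, by omega⟩) := by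
        intro t t' htt
        have := congrArg Fin.val (hfi htt)
        simp only at this
        exact Fin.ext (by omega)
      have hseg0 : (fun t : Fin (i - j.1 + 1) => f ⟨j.1 + t.1, by omega⟩) 0 = f j :=
        congrArg f (Fin.ext (by simp))
      have hsegl : (fun t : Fin (i - j.1 + 1) => f ⟨j.1 + t.1, by omega⟩) (Fin.last (i - j.1)) =
          f (Fin.last i) := congrArg f (Fin.ext (by simp only [Fin.val_last]; omega))
      have hsingle : (Walk.cons hadj.symm Walk.nil : g.Walk (f j) (f (Fin.last i))).IsPath := by
        simp [Walk.isPath_def]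
        intro h
        exact hjlast (hfi h)
      have heq := hU (Walk.cons hadj.symm Walk.nil)
        ((toWalk g (i - j.1) _ hseg_adj).copy hseg0 hsegl)
        hsingle
        (by rw [Walk.isPath_copy]; exact isPath_toWalk g (i - j.1) _ hseg_adj hseg_inj)
        (by rw [Walk.length_copy, length_toWalk]
            simp only [Walk.length_cons, Walk.length_nil]
            omega)
      have hlen := congrArg Walk.length heq
      rw [Walk.length_copy, length_toWalk] at hlen
      simp only [Walk.length_cons, Walk.length_nil] at hlen
      omega
    have h1 : (g.neighborFinset (f (Fin.last i)) ∩ Finset.univ.image f).card ≤ 1 :=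
      (Finset.card_le_card hsub).trans (by simp)
    have h2 := Finset.card_sdiff_add_card_inter (g.neighborFinset (f (Fin.last i)))
      (Finset.univ.image f)
    have h3 := hdeg f hf
    have h4 : ((g.neighborFinset (f (Fin.last i))).card : ℝ) ≤ ((ext f).card : ℝ) + 1 := by
      have h5 : (g.neighborFinset (f (Fin.last i))).card ≤ (ext f).card + 1 := by
        have h6 : ext f = g.neighborFinset (f (Fin.last i)) \ Finset.univ.image f := rfl
        rw [h6]
        omega
      exact_mod_cast h5
    linarith
  have hmaps : ∀ z ∈ (pathSet g r i).sigma (fun f => ext f),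
      (Fin.snoc z.1 z.2 : Fin (i + 2) → V) ∈ pathSet g r (i + 1) := by
    rintro ⟨f, w⟩ hz
    rw [Finset.mem_sigma] at hz
    obtain ⟨hf, hw⟩ := hz
    obtain ⟨hf0, hfi, hfa⟩ := mem_pathSet.mp hf
    rw [hext, Finset.mem_sdiff, SimpleGraph.mem_neighborFinset] at hw
    obtain ⟨hadj, hwim⟩ := hw
    have hwf : ∀ j, f j ≠ w := by
      intro j hj
      exact hwim (Finset.mem_image.mpr ⟨j, Finset.mem_univ j, hj⟩)
    refine mem_pathSet.mpr ⟨?_, snoc_inj hfi hwf, ?_⟩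
    · rw [← Fin.castSucc_zero, Fin.snoc_castSucc]
      exact hf0
    · intro j
      induction j using Fin.lastCases with
      | last =>
        rw [Fin.succ_last, Fin.snoc_last, Fin.snoc_castSucc]
        exact hadj
      | cast j' =>
        rw [Fin.succ_castSucc, Fin.snoc_castSucc, Fin.snoc_castSucc]
        exact hfa j'
  have hinj : ∀ z ∈ (pathSet g r i).sigma (fun f => ext f),
      ∀ z' ∈ (pathSet g r i).sigma (fun f => ext f),
      (Fin.snoc z.1 z.2 : Fin (i + 2) → V) = Fin.snoc z'.1 z'.2 → z = z' := by
    rintro ⟨f, w⟩ - ⟨f', w'⟩ - heq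
    have hww : w = w' := by
      have := congrArg (fun F : Fin (i + 2) → V => F (Fin.last (i + 1))) heq
      simpa [Fin.snoc_last] using this
    have hff : f = f' := by
      funext j
      have := congrArg (fun F : Fin (i + 2) → V => F j.castSucc) heq
      simpa [Fin.snoc_castSucc] using this
    rw [hff, hww]
  have hcards := Finset.card_le_card_of_injOn _ hmaps hinj
  rw [Finset.card_sigma] at hcards
  calc (δ - 1) * ((pathSet g r i).card : ℝ)
      = ∑ _f ∈ pathSet g r i, (δ - 1) := by rw [Finset.sum_const, nsmul_eq_mul]; ring
    _ ≤ ∑ f ∈ pathSet g r i, ((ext f).card : ℝ) := Finset.sum_le_sum hcard_ext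
    _ = ((∑ f ∈ pathSet g r i, (ext f).card : ℕ) : ℝ) := by push_cast; rfl
    _ ≤ ((pathSet g r (i + 1)).card : ℝ) := by exact_mod_cast hcards

open scoped Classical in
noncomputable def edgesOf (g : SimpleGraph V) : Finset (Sym2 V) :=
  Finset.univ.filter (· ∈ g.edgeSet)

lemma mem_edgesOf {g : SimpleGraph V} {e : Sym2 V} : e ∈ edgesOf g ↔ e ∈ g.edgeSet := by
  classical
  simp [edgesOf]

lemma pathSet_chain {g : SimpleGraph V} [DecidableRel g.Adj] {k : ℕ} (hU : UShort g k)
    {A : Finset V} (hin : ∀ a b, g.Adj a b → a ∈ A ∧ b ∈ A) {r : V} (hr : r ∈ A)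
    (δ : ℝ) (hδ1 : 1 ≤ δ) (hdegA : ∀ v ∈ A, δ ≤ (g.degree v : ℝ)) :
    ∀ j : ℕ, j + 1 ≤ k → δ * (δ - 1) ^ j ≤ ((pathSet g r (j + 1)).card : ℝ) := by
  intro j
  induction j with
  | zero =>
    intro h1
    have hb := pathSet_base (g := g) r
    have hd := hdegA r hr
    have : (g.degree r : ℝ) ≤ ((pathSet g r 1).card : ℝ) := by exact_mod_cast hb
    simpa using hd.trans this
  | succ j ihj =>
    intro hjk
    have hstep := pathSet_step hU (r := r) (i := j + 1) (by omega) (by omega) δ ?_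
    · have hprev := ihj (by omega)
      have hnn : (0 : ℝ) ≤ δ - 1 := by linarith
      calc δ * (δ - 1) ^ (j + 1) = (δ - 1) * (δ * (δ - 1) ^ j) := by ring
        _ ≤ (δ - 1) * ((pathSet g r (j + 1)).card : ℝ) := by
            exact mul_le_mul_of_nonneg_left hprev hnn
        _ ≤ ((pathSet g r (j + 1 + 1)).card : ℝ) := hstep
    · intro f hf
      have hmem := last_mem_of_pathSet hin (by omega) hf
      have := hdegA _ hmem
      rwa [SimpleGraph.degree] at this

lemma rpow_step {x : ℝ} (hx : 1 ≤ x) {t : ℝ} (ht : 0 ≤ t) :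
    (x - 1) ^ ((1 : ℝ) + t) + x ^ t ≤ x ^ ((1 : ℝ) + t) := by
  have hx0 : (0 : ℝ) < x := by linarith
  have hx1 : (0 : ℝ) ≤ x - 1 := by linarith
  have hne : (1 : ℝ) + t ≠ 0 := by positivity
  have e1 : (x - 1) ^ ((1 : ℝ) + t) = (x - 1) * (x - 1) ^ t := by
    rw [Real.rpow_add' hx1 hne, Real.rpow_one]
  have e2 : x ^ ((1 : ℝ) + t) = x * x ^ t := by
    rw [Real.rpow_add' (le_of_lt hx0) hne, Real.rpow_one]
  have h5 : (x - 1) ^ t ≤ x ^ t := Real.rpow_le_rpow hx1 (by linarith) ht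
  have h6 : (x - 1) * (x - 1) ^ t ≤ (x - 1) * x ^ t := mul_le_mul_of_nonneg_left h5 hx1
  rw [e1, e2]
  nlinarith

lemma count_le {k : ℕ} (hk : 1 ≤ k) :
    ∀ (n : ℕ) (g : SimpleGraph V) (A : Finset V), A.card = n →
      (∀ a b, g.Adj a b → a ∈ A ∧ b ∈ A) → UShort g k →
      ((edgesOf g).card : ℝ) ≤ (n : ℝ) + (n : ℝ) ^ ((1 : ℝ) + 1 / (k : ℝ)) := by
  classical
  intro n
  induction n using Nat.strong_induction_on with
  | _ n ih =>
    intro g A hA hin hU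
    by_cases hex : ∃ v ∈ A, (g.degree v : ℝ) < 1 + (n : ℝ) ^ ((1 : ℝ) / (k : ℝ))
    · obtain ⟨v, hv, hdv⟩ := hex
      have hn1 : 1 ≤ n := by rw [← hA]; exact Finset.card_pos.mpr ⟨v, hv⟩
      set g' := g.deleteEdges (g.incidenceSet v) with hg'
      have hle : g' ≤ g := SimpleGraph.deleteEdges_le _
      have hin' : ∀ a b, g'.Adj a b → a ∈ A.erase v ∧ b ∈ A.erase v := by
        intro a b hab
        rw [hg', SimpleGraph.deleteEdges_adj] at hab
        obtain ⟨hab1, hab2⟩ := hab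
        constructor
        · refine Finset.mem_erase.mpr ⟨?_, (hin a b hab1).1⟩
          rintro rfl
          exact hab2 ⟨(SimpleGraph.mem_edgeSet g).mpr hab1, Sym2.mem_mk_left _ _⟩
        · refine Finset.mem_erase.mpr ⟨?_, (hin a b hab1).2⟩
          rintro rfl
          exact hab2 ⟨(SimpleGraph.mem_edgeSet g).mpr hab1, Sym2.mem_mk_right _ _⟩
      have hsub : edgesOf g ⊆ edgesOf g' ∪ (g.neighborFinset v).image (fun w => s(v, w)) := by
        intro e he
        rw [mem_edgesOf] at he
        induction e using Sym2.ind with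
        | _ a b =>
          rw [SimpleGraph.mem_edgeSet] at he
          by_cases hva : v = a
          · subst hva
            exact Finset.mem_union_right _ (Finset.mem_image.mpr
              ⟨b, (SimpleGraph.mem_neighborFinset _ _ _).mpr he, rfl⟩)
          · by_cases hvb : v = b
            · subst hvb
              exact Finset.mem_union_right _ (Finset.mem_image.mpr
                ⟨a, (SimpleGraph.mem_neighborFinset _ _ _).mpr he.symm, Sym2.eq_swap⟩)
            · refine Finset.mem_union_left _ (mem_edgesOf.mpr ?_)
              rw [hg']
              rw [SimpleGraph.mem_edgeSet, SimpleGraph.deleteEdges_adj]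
              refine ⟨he, fun hmem => ?_⟩
              rcases Sym2.mem_iff.mp hmem.2 with h | h
              · exact hva h
              · exact hvb h
      have hcard : (edgesOf g).card ≤ (edgesOf g').card + g.degree v := by
        refine (Finset.card_le_card hsub).trans ?_
        refine (Finset.card_union_le _ _).trans ?_
        have h1 := Finset.card_image_le (s := g.neighborFinset v) (f := fun w => s(v, w))
        have h2 : (g.neighborFinset v).card = g.degree v := rfl
        omega
      have hU' : UShort g' k := hU.anti hle
      have hcard' : (A.erase v).card = n - 1 := by rw [Finset.card_erase_of_mem hv, hA]
      have hih := ih (n - 1) (by omega) g' (A.erase v) hcard' hin' hU'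
      have hcast : ((n - 1 : ℕ) : ℝ) = (n : ℝ) - 1 := by
        push_cast [hn1]
        ring
      have hn1R : (1 : ℝ) ≤ (n : ℝ) := by exact_mod_cast hn1
      have hstep := rpow_step hn1R (t := 1 / (k : ℝ)) (by positivity)
      rw [hcast] at hih
      calc ((edgesOf g).card : ℝ)
          ≤ ((edgesOf g').card : ℝ) + (g.degree v : ℝ) := by exact_mod_cast hcard
        _ ≤ ((n : ℝ) - 1) + ((n : ℝ) - 1) ^ ((1 : ℝ) + 1 / (k : ℝ)) +
            (1 + (n : ℝ) ^ ((1 : ℝ) / (k : ℝ))) := by linarith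
        _ ≤ (n : ℝ) + (n : ℝ) ^ ((1 : ℝ) + 1 / (k : ℝ)) := by linarith
    · push_neg at hex
      by_cases hE : edgesOf g = ∅
      · rw [hE]
        simp only [Finset.card_empty, Nat.cast_zero]
        positivity
      · obtain ⟨e, he⟩ := Finset.nonempty_iff_ne_empty.mpr hE
        exfalso
        induction e using Sym2.ind with
        | _ a b =>
        rw [mem_edgesOf, SimpleGraph.mem_edgeSet] at he
        have hrA : a ∈ A := (hin a b he).1
        have hn1 : 1 ≤ n := by rw [← hA]; exact Finset.card_pos.mpr ⟨a, hrA⟩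
        set c : ℝ := (n : ℝ) ^ ((1 : ℝ) / (k : ℝ)) with hc
        have hc0 : (0 : ℝ) ≤ c := by rw [hc]; positivity
        have hdegc : ∀ v ∈ A, (1 + c : ℝ) ≤ (g.degree v : ℝ) := by
          intro v hv
          exact hex v hv
        have hchain := pathSet_chain hU hin hrA (1 + c) (by linarith) hdegc (k - 1) (by omega)
        rw [show k - 1 + 1 = k from by omega] at hchain
        rw [show (1 + c) - 1 = c from by ring] at hchain
        have hup : ((pathSet g a k).card : ℝ) ≤ ((A.erase a).card : ℝ) := by
          exact_mod_cast card_pathSet_endpoint hU hk hin a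
        have herase : ((A.erase a).card : ℝ) = (n : ℝ) - 1 := by
          rw [Finset.card_erase_of_mem hrA, hA]
          push_cast [hn1]
          ring
        have hcmk : c ^ (k - 1) * c = (n : ℝ) := by
          rw [← pow_succ, show k - 1 + 1 = k from by omega, hc,
            ← Real.rpow_natCast ((n : ℝ) ^ ((1 : ℝ) / (k : ℝ))) k,
            ← Real.rpow_mul (by positivity)]
          rw [show (1 : ℝ) / (k : ℝ) * (k : ℕ) = 1 from by
            field_simp]
          exact Real.rpow_one _
        have hpow : (0 : ℝ) ≤ c ^ (k - 1) := by positivity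
        have hexp : (1 + c) * c ^ (k - 1) = c ^ (k - 1) + (n : ℝ) := by
          rw [add_mul, one_mul, mul_comm c, hcmk]
        linarith

end Count

section Greedy

variable [Fintype V] [DecidableEq V]

open scoped Classical

noncomputable def we (wG : V → V → ℝ) (hs : ∀ a b, wG a b = wG b a) : Sym2 V → ℝ :=
  Sym2.lift ⟨wG, fun a b => hs a b⟩

@[simp] lemma we_mk (wG : V → V → ℝ) (hs : ∀ a b, wG a b = wG b a) (a b : V) :
    we wG hs s(a, b) = wG a b := rfl

noncomputable def EG (wG : V → V → ℝ) (hs : ∀ a b, wG a b = wG b a) : Finset (Sym2 V) :=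
  Finset.univ.filter (fun e => 0 < we wG hs e ∧ ¬ e.IsDiag)

lemma mem_EG {wG : V → V → ℝ} {hs : ∀ a b, wG a b = wG b a} {e : Sym2 V} :
    e ∈ EG wG hs ↔ 0 < we wG hs e ∧ ¬ e.IsDiag := by
  simp [EG]

noncomputable def wOf (wG : V → V → ℝ) (F : Finset (Sym2 V)) : V → V → ℝ :=
  fun a b => if s(a, b) ∈ F ∧ a ≠ b then wG a b else 0

def grF (F : Finset (Sym2 V)) : SimpleGraph V := SimpleGraph.fromEdgeSet ↑F

lemma grF_adj {F : Finset (Sym2 V)} {a b : V} :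
    (grF F).Adj a b ↔ s(a, b) ∈ F ∧ a ≠ b := by
  simp [grF, SimpleGraph.fromEdgeSet_adj]

lemma wOf_eq_of_mem {wG : V → V → ℝ} {F : Finset (Sym2 V)} {a b : V}
    (h : s(a, b) ∈ F) (hne : a ≠ b) : wOf wG F a b = wG a b := if_pos ⟨h, hne⟩

lemma wOf_pos_elim {wG : V → V → ℝ} {F : Finset (Sym2 V)} {a b : V}
    (h : 0 < wOf wG F a b) : s(a, b) ∈ F ∧ a ≠ b ∧ wOf wG F a b = wG a b := by
  by_cases hc : s(a, b) ∈ F ∧ a ≠ b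
  · exact ⟨hc.1, hc.2, if_pos hc⟩
  · rw [wOf, if_neg hc] at h
    exact absurd h (by norm_num)

lemma wOf_pos_iff {wG : V → V → ℝ} {hs : ∀ a b, wG a b = wG b a} {F : Finset (Sym2 V)}
    (hF : F ⊆ EG wG hs) {a b : V} : 0 < wOf wG F a b ↔ (grF F).Adj a b := by
  constructor
  · intro h
    obtain ⟨h1, h2, -⟩ := wOf_pos_elim h
    exact grF_adj.mpr ⟨h1, h2⟩
  · intro h
    obtain ⟨h1, h2⟩ := grF_adj.mp h
    rw [wOf_eq_of_mem h1 h2]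
    have := (mem_EG.mp (hF h1)).1
    rwa [we_mk] at this

def condP (wG : V → V → ℝ) (k : ℕ) (F : Finset (Sym2 V)) (e : Sym2 V) : Prop :=
  ∀ x y : V, s(x, y) = e →
    ∃ (m : ℕ) (f : Fin (m + 1) → V), IsPathIn (wOf wG F) x y m f ∧
      wG x y * pathRes (wOf wG F) m f ≤ 2 * (k : ℝ) - 1

lemma pathIn_mono {wG : V → V → ℝ} {F F' : Finset (Sym2 V)} (hFF : F ⊆ F')
    {x y : V} {m : ℕ} {f : Fin (m + 1) → V} (h : IsPathIn (wOf wG F) x y m f) :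
    IsPathIn (wOf wG F') x y m f ∧ pathRes (wOf wG F') m f = pathRes (wOf wG F) m f := by
  obtain ⟨h0, hl, hi, hp⟩ := h
  have key : ∀ j : Fin m, wOf wG F' (f j.castSucc) (f j.succ) = wOf wG F (f j.castSucc) (f j.succ)
      ∧ 0 < wOf wG F' (f j.castSucc) (f j.succ) := by
    intro j
    obtain ⟨h1, h2, h3⟩ := wOf_pos_elim (hp j)
    rw [h3, wOf_eq_of_mem (hFF h1) h2]
    exact ⟨rfl, by rw [← h3]; exact hp j⟩
  refine ⟨⟨h0, hl, hi, fun j => (key j).2⟩, ?_⟩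
  unfold pathRes
  exact Finset.sum_congr rfl (fun j _ => by rw [(key j).1])

lemma condP_mono {wG : V → V → ℝ} {k : ℕ} {F F' : Finset (Sym2 V)} (hFF : F ⊆ F')
    {e : Sym2 V} (h : condP wG k F e) : condP wG k F' e := by
  intro x y hxy
  obtain ⟨m, f, hpath, hres⟩ := h x y hxy
  obtain ⟨hpath', hres'⟩ := pathIn_mono hFF hpath
  exact ⟨m, f, hpath', by rwa [hres']⟩

noncomputable def gstep (wG : V → V → ℝ) (k : ℕ) (F : Finset (Sym2 V)) (e : Sym2 V) :
    Finset (Sym2 V) :=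
  if condP wG k F e then F else insert e F

noncomputable def greedy (wG : V → V → ℝ) (k : ℕ) (L : List (Sym2 V)) (F : Finset (Sym2 V)) :
    Finset (Sym2 V) :=
  L.foldl (gstep wG k) F

lemma greedy_spec {wG : V → V → ℝ} (hs : ∀ a b, wG a b = wG b a) {k : ℕ} (hk : 1 ≤ k) :
    ∀ (L : List (Sym2 V)) (F : Finset (Sym2 V)),
      (∀ e ∈ L, e ∈ EG wG hs) →
      F ⊆ EG wG hs →
      (∀ s ∈ F, ∀ e ∈ L, we wG hs e ≤ we wG hs s) →
      L.Pairwise (fun e e' => we wG hs e' ≤ we wG hs e) →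
      UShort (grF F) k →
      F ⊆ greedy wG k L F ∧ greedy wG k L F ⊆ EG wG hs ∧
        UShort (grF (greedy wG k L F)) k ∧ ∀ e ∈ L, condP wG k (greedy wG k L F) e := by
  intro L
  induction L with
  | nil =>
    intro F _ hF _ _ hU
    exact ⟨Finset.Subset.refl F, hF, hU, by simp⟩
  | cons e L ih =>
    intro F hmem hF hwts hsorted hU
    have heEG : e ∈ EG wG hs := hmem e (by simp)
    have hgreedy : greedy wG k (e :: L) F = greedy wG k L (gstep wG k F e) := rfl
    by_cases hc : condP wG k F e
    · rw [hgreedy]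
      rw [gstep, if_pos hc]
      obtain ⟨hsub, hEG', hU', hcond⟩ := ih F (fun e' he' => hmem e' (by simp [he']))
        hF (fun s hsF e' he' => hwts s hsF e' (by simp [he']))
        (List.pairwise_cons.mp hsorted).2 hU
      refine ⟨hsub, hEG', hU', ?_⟩
      intro e' he'
      rcases List.mem_cons.mp he' with rfl | he'
      · exact condP_mono hsub hc
      · exact hcond e' he'
    · rw [hgreedy, gstep, if_neg hc]
      -- the new edge is inserted
      rw [condP] at hc
      push_neg at hc
      obtain ⟨x, y, hxy, hnp⟩ := hc
      have hwxy : 0 < wG x y := by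
        have := (mem_EG.mp heEG).1
        rw [← hxy, we_mk] at this
        exact this
      have hU1 : UShort (grF (insert e F)) k := by
        refine UShort.insert_edge (g := grF F) (x := x) (y := y) ?_ ?_ hU ?_
        · apply SimpleGraph.fromEdgeSet_mono
          intro z hz
          simp only [Finset.coe_insert, Set.mem_insert_iff]
          right
          exact hz
        · intro a b hab
          obtain ⟨h1, h2⟩ := grF_adj.mp hab
          rcases Finset.mem_insert.mp h1 with rfl | h1'
          · right
            rw [hxy]
          · left
            exact grF_adj.mpr ⟨h1', h2⟩
        · intro w hw
          obtain ⟨f, hf0, hfl, hfi, hfa⟩ := exists_fn_of_walk w.bypass w.bypass_isPath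
          have hlb : w.bypass.length + 1 ≤ 2 * k :=
            le_trans (by have := Walk.length_bypass_le w; omega) hw
          have hpath : IsPathIn (wOf wG F) x y w.bypass.length f := by
            refine ⟨hf0, hfl, hfi, fun j => ?_⟩
            rw [wOf_pos_iff hF]
            exact hfa j
          have hres : wG x y * pathRes (wOf wG F) w.bypass.length f ≤ 2 * (k : ℝ) - 1 := by
            have hterm : ∀ j : Fin w.bypass.length,
                (wOf wG F (f j.castSucc) (f j.succ))⁻¹ ≤ (wG x y)⁻¹ := by
              intro j
              have hadj := hfa j
              obtain ⟨h1, h2⟩ := grF_adj.mp hadj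
              have heq : wOf wG F (f j.castSucc) (f j.succ) = wG (f j.castSucc) (f j.succ) :=
                wOf_eq_of_mem h1 h2
              have hge : wG x y ≤ wG (f j.castSucc) (f j.succ) := by
                have := hwts _ h1 e (by simp)
                rw [we_mk, ← hxy, we_mk] at this
                exact this
              rw [heq]
              exact inv_anti₀ hwxy hge
            have hsum : pathRes (wOf wG F) w.bypass.length f ≤
                (w.bypass.length : ℝ) * (wG x y)⁻¹ := by
              unfold pathRes
              calc ∑ j : Fin w.bypass.length, (wOf wG F (f j.castSucc) (f j.succ))⁻¹
                  ≤ ∑ _j : Fin w.bypass.length, (wG x y)⁻¹ := Finset.sum_le_sum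
                    (fun j _ => hterm j)
                _ = (w.bypass.length : ℝ) * (wG x y)⁻¹ := by
                    rw [Finset.sum_const, Finset.card_univ, Fintype.card_fin, nsmul_eq_mul]
            have hm : (w.bypass.length : ℝ) ≤ 2 * (k : ℝ) - 1 := by
              have : (w.bypass.length : ℝ) + 1 ≤ 2 * (k : ℝ) := by exact_mod_cast hlb
              linarith
            calc wG x y * pathRes (wOf wG F) w.bypass.length f
                ≤ wG x y * ((w.bypass.length : ℝ) * (wG x y)⁻¹) := by
                  exact mul_le_mul_of_nonneg_left hsum (le_of_lt hwxy)
              _ = (w.bypass.length : ℝ) := by field_simp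
              _ ≤ 2 * (k : ℝ) - 1 := hm
          exact absurd hres (not_le.mpr (hnp w.bypass.length f hpath))
      have hFe : insert e F ⊆ EG wG hs := Finset.insert_subset heEG hF
      have hwts1 : ∀ s ∈ insert e F, ∀ e' ∈ L, we wG hs e' ≤ we wG hs s := by
        intro s hsF e' he'
        rcases Finset.mem_insert.mp hsF with rfl | hsF'
        · exact (List.pairwise_cons.mp hsorted).1 e' he'
        · exact hwts s hsF' e' (by simp [he'])
      obtain ⟨hsub, hEG', hU', hcond⟩ := ih (insert e F)
        (fun e' he' => hmem e' (by simp [he'])) hFe hwts1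
        (List.pairwise_cons.mp hsorted).2 hU1
      refine ⟨Finset.Subset.trans (Finset.subset_insert e F) hsub, hEG', hU', ?_⟩
      intro e' he'
      rcases List.mem_cons.mp he' with rfl | he'
      · -- single-edge path
        refine condP_mono hsub ?_
        intro x' y' hxy'
        have hne : x' ≠ y' := by
          intro h
          apply (mem_EG.mp heEG).2
          rw [← hxy']
          exact Sym2.mk_isDiag_iff.mpr h
        have hmemI : s(x', y') ∈ insert e' F := by
          rw [hxy']
          exact Finset.mem_insert_self e' F
        have hwx' : 0 < wG x' y' := by
          have := (mem_EG.mp heEG).1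
          rw [← hxy', we_mk] at this
          exact this
        refine ⟨1, ![x', y'], ⟨rfl, rfl, ?_, ?_⟩, ?_⟩
        · intro a b hab
          fin_cases a <;> fin_cases b <;> simp_all <;> exact hne (by simpa using hab)
        · intro j
          fin_cases j
          show 0 < wOf wG (insert e' F) x' y'
          rw [wOf_eq_of_mem hmemI hne]
          exact hwx'
        · have h1 : pathRes (wOf wG (insert e' F)) 1 ![x', y'] =
              (wOf wG (insert e' F) x' y')⁻¹ := by
            unfold pathRes
            rw [Fin.sum_univ_one]
            rfl
          rw [h1, wOf_eq_of_mem hmemI hne, mul_inv_cancel₀ (ne_of_gt hwx')]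
          have hk1 : (1 : ℝ) ≤ (k : ℝ) := by exact_mod_cast hk
          linarith
      · exact hcond e' he'

lemma ushort_empty (k : ℕ) : UShort (grF (∅ : Finset (Sym2 V))) k := by
  intro u v p q hp hq hlen
  cases p with
  | nil =>
    cases q with
    | nil => rfl
    | cons h q => exact absurd (grF_adj.mp h).1 (by simp)
  | cons h p => exact absurd (grF_adj.mp h).1 (by simp)

noncomputable def pairsOf : Sym2 V → Finset (V × V) :=
  Sym2.lift ⟨fun a b => ({(a, b), (b, a)} : Finset (V × V)), fun a b => by
    show ({(a, b), (b, a)} : Finset (V × V)) = {(b, a), (a, b)}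
    rw [Finset.pair_comm]⟩

lemma mem_pairsOf {s : Sym2 V} {p : V × V} : p ∈ pairsOf s ↔ s(p.1, p.2) = s := by
  induction s using Sym2.ind with
  | _ x y =>
    show p ∈ ({(x, y), (y, x)} : Finset (V × V)) ↔ _
    simp only [Finset.mem_insert, Finset.mem_singleton]
    constructor
    · rintro (rfl | rfl)
      · rfl
      · exact Sym2.eq_swap
    · intro h
      rcases Sym2.eq_iff.mp h with ⟨h1, h2⟩ | ⟨h1, h2⟩
      · left
        exact Prod.ext_iff.mpr ⟨h1, h2⟩
      · right
        exact Prod.ext_iff.mpr ⟨h1, h2⟩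

lemma card_pairsOf {s : Sym2 V} (h : ¬ s.IsDiag) : (pairsOf s).card = 2 := by
  induction s using Sym2.ind with
  | _ x y =>
    have hxy : x ≠ y := fun he => h (Sym2.mk_isDiag_iff.mpr he)
    show ({(x, y), (y, x)} : Finset (V × V)).card = 2
    rw [Finset.card_insert_of_notMem (by simp [Prod.ext_iff, hxy]), Finset.card_singleton]

lemma card_filter_pairs {wG : V → V → ℝ} {hs : ∀ a b, wG a b = wG b a} {F : Finset (Sym2 V)}
    (hF : F ⊆ EG wG hs) :
    (Finset.univ.filter fun p : V × V => 0 < wOf wG F p.1 p.2).card = 2 * F.card := by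
  have hset : (Finset.univ.filter fun p : V × V => 0 < wOf wG F p.1 p.2) =
      F.biUnion pairsOf := by
    ext p
    rw [Finset.mem_filter, Finset.mem_biUnion]
    constructor
    · rintro ⟨-, hp⟩
      obtain ⟨h1, h2, -⟩ := wOf_pos_elim hp
      exact ⟨s(p.1, p.2), h1, mem_pairsOf.mpr rfl⟩
    · rintro ⟨t, htF, hpt⟩
      have hteq := mem_pairsOf.mp hpt
      refine ⟨Finset.mem_univ _, ?_⟩
      rw [← hteq] at htF
      have hmem := mem_EG.mp (hF htF)
      have hne : p.1 ≠ p.2 := fun he => hmem.2 (Sym2.mk_isDiag_iff.mpr he)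
      rw [wOf_eq_of_mem htF hne]
      have := hmem.1
      rwa [we_mk] at this
  rw [hset, Finset.card_biUnion]
  · rw [Finset.sum_congr rfl (fun t ht => card_pairsOf (mem_EG.mp (hF ht)).2),
      Finset.sum_const, smul_eq_mul, mul_comm]
  · intro t ht t' ht' htt
    rw [Function.onFun, Finset.disjoint_left]
    intro p hp hp'
    exact htt ((mem_pairsOf.mp hp).symm.trans (mem_pairsOf.mp hp'))

lemma edgesOf_grF {wG : V → V → ℝ} {hs : ∀ a b, wG a b = wG b a} {F : Finset (Sym2 V)}
    (hF : F ⊆ EG wG hs) : edgesOf (grF F) = F := by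
  ext e
  rw [mem_edgesOf]
  show e ∈ (SimpleGraph.fromEdgeSet ↑F).edgeSet ↔ e ∈ F
  rw [SimpleGraph.edgeSet_fromEdgeSet]
  constructor
  · rintro ⟨h1, -⟩
    exact h1
  · intro h
    exact ⟨h, (mem_EG.mp (hF h)).2⟩

end Greedy

end SpannerAux

open SpannerAux

/-- Existence of spanners: every weighted graph on `n ≥ 2` vertices has, for each integer
`k ≥ 1`, a subgraph with at most `n + n^(1+1/k)` edges that is a `(2k−1)`-spanner. -/
theorem exists_spanner {V : Type*} [Fintype V] [DecidableEq V]
    (wG : V → V → ℝ) (hG : IsWeightedGraph wG) (hn : 2 ≤ Fintype.card V)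
    (k : ℕ) (hk : 1 ≤ k) :
    ∃ wH : V → V → ℝ,
      edgeCount wH ≤ (Fintype.card V : ℝ) +
        (Fintype.card V : ℝ) ^ ((1 : ℝ) + 1 / (k : ℝ)) ∧
      IsSpanner (2 * (k : ℝ) - 1) wG wH := by
  classical
  obtain ⟨hs, hdiag, hnn⟩ := hG
  set le : Sym2 V → Sym2 V → Bool :=
    fun e e' => decide (we wG hs e' ≤ we wG hs e) with hle
  set L := (EG wG hs).toList.mergeSort le with hL
  have hperm : L.Perm (EG wG hs).toList := List.mergeSort_perm _ _
  have hmemL : ∀ e, e ∈ L ↔ e ∈ EG wG hs := fun e => by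
    rw [hperm.mem_iff, Finset.mem_toList]
  have hsorted : L.Pairwise (fun e e' => we wG hs e' ≤ we wG hs e) := by
    have hP := List.pairwise_mergeSort (le := le)
      (fun a b c h1 h2 => by
        simp only [hle, decide_eq_true_eq] at h1 h2 ⊢
        exact le_trans h2 h1)
      (fun a b => by
        simp only [hle, Bool.or_eq_true, decide_eq_true_eq]
        exact le_total _ _)
      (EG wG hs).toList
    refine hP.imp ?_
    intro a b h
    simpa [hle] using h
  set F := greedy wG k L ∅ with hF
  obtain ⟨-, hFEG, hU, hcond⟩ := greedy_spec hs hk L ∅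
    (fun e he => (hmemL e).mp he) (Finset.empty_subset _) (by simp) hsorted
    (ushort_empty k)
  refine ⟨wOf wG F, ?_, ⟨?_, ?_⟩, ?_⟩
  · -- edge count
    have hec : edgeCount (wOf wG F) = (F.card : ℝ) := by
      rw [edgeCount, card_filter_pairs hFEG]
      push_cast
      ring
    have hcount := count_le hk (Fintype.card V) (grF F) Finset.univ
      (by rw [Finset.card_univ]) (fun a b _ => ⟨Finset.mem_univ a, Finset.mem_univ b⟩) hU
    rw [edgesOf_grF hFEG] at hcount
    rw [hec]
    exact hcount
  · -- symmetric
    intro i j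
    have hcond2 : (s(i, j) ∈ F ∧ i ≠ j) ↔ (s(j, i) ∈ F ∧ j ≠ i) := by
      rw [Sym2.eq_swap]
      exact and_congr Iff.rfl ⟨Ne.symm, Ne.symm⟩
    show (if s(i, j) ∈ F ∧ i ≠ j then wG i j else 0) =
      (if s(j, i) ∈ F ∧ j ≠ i then wG j i else 0)
    rw [if_congr hcond2 (hs i j) rfl]
  · -- agree or zero
    intro i j
    show (if s(i, j) ∈ F ∧ i ≠ j then wG i j else 0) = wG i j ∨
      (if s(i, j) ∈ F ∧ i ≠ j then wG i j else 0) = 0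
    split
    · exact Or.inl rfl
    · exact Or.inr rfl
  · -- spanner paths
    intro u v hpos
    have hne : u ≠ v := by
      intro h
      rw [h, hdiag] at hpos
      exact lt_irrefl 0 hpos
    have heEG : s(u, v) ∈ EG wG hs := mem_EG.mpr
      ⟨by rwa [we_mk], fun h => hne (Sym2.mk_isDiag_iff.mp h)⟩
    exact hcond s(u, v) ((hmemL _).mpr heEG) u v rfl
end
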